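/- Let q be a power of an odd prime and let G = 1 + 𝔤 be a pattern subgroup of UT_n(F_{q^k}), regarded over F_q, with † an involutive F_q-algebra antiautomorphism of 𝔤 satisfying (α e_ij)† ∈ F_{q^k}^× e_{j̄ ī} for all α ∈ F_{q^k}^×, and let 𝔲 = {x ∈ 𝔤 | x† = −x}. If x ∈ 𝔲 and g ∈ G are such that gx ∈ 𝔲, then there exists h ∈ G with gx = h x h†. -/

import Mathlib

open Matrix

section PatternGroups

variable (F : Type) [Field F] (E : Type) [Field E] [Algebra F E] {n : ℕ}

/-- The pattern subalgebra `𝔤 ⊆ 𝔲𝔱_n(E)` of matrices supported on the set `S` of strict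
relations `i ≺ j` of a subposet of the usual linear order on `[n]`. -/
def patAlg (S : Set (Fin n × Fin n)) : Set (Matrix (Fin n) (Fin n) E) :=
  {x | ∀ i j : Fin n, (i, j) ∉ S → x i j = 0}

/-- The pattern subgroup `G = 1 + 𝔤`. -/
def patGrp (S : Set (Fin n × Fin n)) : Set (Matrix (Fin n) (Fin n) E) :=
  {g | ∃ x ∈ patAlg E S, g = 1 + x}

/-- The two-sided ideal `𝔥 = {x ∈ 𝔤 | x_{ij} = 0 if j ≤ n/2}` (indices read 1-based). -/
def patHAlg (S : Set (Fin n × Fin n)) : Set (Matrix (Fin n) (Fin n) E) :=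
  {x | x ∈ patAlg E S ∧ ∀ i j : Fin n, (j : ℕ) + 1 ≤ n / 2 → x i j = 0}

/-- The normal subgroup `H = 1 + 𝔥` of `G`. -/
def patHGrp (S : Set (Fin n × Fin n)) : Set (Matrix (Fin n) (Fin n) E) :=
  {g | ∃ x ∈ patHAlg E S, g = 1 + x}

/-- The extension of `†` from `𝔤` to `G = 1 + 𝔤`: `(1+x)† = 1 + x†`. -/
def dagGrp (dag : Matrix (Fin n) (Fin n) E → Matrix (Fin n) (Fin n) E)
    (g : Matrix (Fin n) (Fin n) E) : Matrix (Fin n) (Fin n) E :=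
  1 + dag (g - 1)

/-- The subgroup `U = {u ∈ G | u† = u⁻¹}` of the pattern group `G`. -/
def patUGrp (S : Set (Fin n × Fin n))
    (dag : Matrix (Fin n) (Fin n) E → Matrix (Fin n) (Fin n) E) :
    Set (Matrix (Fin n) (Fin n) E) :=
  {u | u ∈ patGrp E S ∧ u * dagGrp E dag u = 1 ∧ dagGrp E dag u * u = 1}

/-- The set `𝔲 = {x ∈ 𝔤 | x† = -x}`. -/
def patUAlg (S : Set (Fin n × Fin n))
    (dag : Matrix (Fin n) (Fin n) E → Matrix (Fin n) (Fin n) E) :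
    Set (Matrix (Fin n) (Fin n) E) :=
  {x | x ∈ patAlg E S ∧ dag x = -x}

/-- `†` is an involutive `F`-algebra antiautomorphism of the pattern algebra `𝔤` sending
each `α e_{ij}` (`α ∈ E^×`) into `E^× e_{\bar j \bar i}`, where `\bar i = n + 1 - i`. -/
structure IsPatternAntiInvolution (S : Set (Fin n × Fin n))
    (dag : Matrix (Fin n) (Fin n) E → Matrix (Fin n) (Fin n) E) : Prop where
  map_mem : ∀ x ∈ patAlg E S, dag x ∈ patAlg E S
  map_add : ∀ x ∈ patAlg E S, ∀ y ∈ patAlg E S, dag (x + y) = dag x + dag y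
  map_smul : ∀ (c : F), ∀ x ∈ patAlg E S,
    dag (algebraMap F E c • x) = algebraMap F E c • dag x
  map_mul : ∀ x ∈ patAlg E S, ∀ y ∈ patAlg E S, dag (x * y) = dag y * dag x
  invol : ∀ x ∈ patAlg E S, dag (dag x) = x
  elementary : ∀ i j : Fin n, (i, j) ∈ S → ∀ α : E, α ≠ 0 →
    ∃ β : E, β ≠ 0 ∧ dag (Matrix.single i j α) = Matrix.single j.rev i.rev β

/-- A Springer morphism: a bijection `f : G → 𝔤` with `f(U) = 𝔲` and
`f(1+x) = x + Σ_{i ≥ 2} a_i x^i` with coefficients `a_i ∈ F`. -/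
def IsSpringerMorphism (S : Set (Fin n × Fin n))
    (dag f : Matrix (Fin n) (Fin n) E → Matrix (Fin n) (Fin n) E) : Prop :=
  Set.BijOn f (patGrp E S) (patAlg E S) ∧
  f '' patUGrp E S dag = patUAlg E S dag ∧
  ∃ (N : ℕ) (a : ℕ → F), a 1 = 1 ∧
    ∀ x ∈ patAlg E S, f (1 + x) = ∑ i ∈ Finset.Ico 1 N, algebraMap F E (a i) • x ^ i

/-- The orbit `G · w = {g w g† | g ∈ G}` of `w` under the action `g · x = g x g†`. -/
def patGrpDot (S : Set (Fin n × Fin n))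
    (dag : Matrix (Fin n) (Fin n) E → Matrix (Fin n) (Fin n) E)
    (w : Matrix (Fin n) (Fin n) E) : Set (Matrix (Fin n) (Fin n) E) :=
  {z | ∃ g ∈ patGrp E S, z = g * w * dagGrp E dag g}

end PatternGroups

section Supercharacters

variable (F : Type) [Field F] (E : Type) [Field E] [Algebra F E] {n : ℕ}

/-- The orbit of `λ ∈ 𝔲*` under a subset `T ⊆ G` (for `T = G` or `T = H`), acting by
`(g·λ)(x) = λ(g⁻¹ · x) = λ(g⁻¹ x (g⁻¹)†)`.  An element `λ ∈ 𝔲*` is recorded as a function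
`𝔲 → F` (here represented via a functional `lam` on the full matrix space: only its values
on `𝔲` matter). -/
def patDualOrbit (S : Set (Fin n × Fin n))
    (dag : Matrix (Fin n) (Fin n) E → Matrix (Fin n) (Fin n) E)
    (T : Set (Matrix (Fin n) (Fin n) E))
    (lam : Module.Dual F (Matrix (Fin n) (Fin n) E)) :
    Set (↥(patUAlg E S dag) → F) :=
  {ψ | ∃ g ∈ T, ∀ x : ↥(patUAlg E S dag),
    ψ x = lam (g⁻¹ * (x : Matrix (Fin n) (Fin n) E) * dagGrp E dag g⁻¹)}

/-- The supercharacter `χ_λ = (|H·λ|/|G·λ|) Σ_{μ ∈ G·λ} θ ∘ μ ∘ f` of `U`, for `λ ∈ 𝔲*`. -/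
noncomputable def patSupchar (S : Set (Fin n × Fin n))
    (dag f : Matrix (Fin n) (Fin n) E → Matrix (Fin n) (Fin n) E)
    (θ : AddChar F ℂ) (lam : Module.Dual F (Matrix (Fin n) (Fin n) E))
    (u : Matrix (Fin n) (Fin n) E) : ℂ :=
  (Nat.card (patDualOrbit F E S dag (patHGrp E S) lam) : ℂ) /
    (Nat.card (patDualOrbit F E S dag (patGrp E S) lam) : ℂ) *
    ∑ᶠ ψ ∈ patDualOrbit F E S dag (patGrp E S) lam,
      @dite ℂ (f u ∈ patUAlg E S dag) (Classical.propDecidable _)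
        (fun h => θ (ψ ⟨f u, h⟩)) (fun _ => 0)

/-- The superclass `K_u = {v ∈ U | f(v) ∈ G · f(u)}` of `u`, as a subset of the ambient
matrix space. -/
def patSupclass (S : Set (Fin n × Fin n))
    (dag f : Matrix (Fin n) (Fin n) E → Matrix (Fin n) (Fin n) E)
    (u : Matrix (Fin n) (Fin n) E) : Set (Matrix (Fin n) (Fin n) E) :=
  {v | v ∈ patUGrp E S dag ∧ f v ∈ patGrpDot E S dag (f u)}

end Supercharacters

section AuxLemmas

open Polynomial

variable {F : Type} [Field F] {E : Type} [Field E] [Algebra F E] {n : ℕ}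
  {S : Set (Fin n × Fin n)}

lemma patAlg_add' {x y : Matrix (Fin n) (Fin n) E} (hx : x ∈ patAlg E S)
    (hy : y ∈ patAlg E S) : x + y ∈ patAlg E S := fun i j h => by
  simp [Matrix.add_apply, hx i j h, hy i j h]

lemma patAlg_smul' (c : E) {x : Matrix (Fin n) (Fin n) E} (hx : x ∈ patAlg E S) :
    c • x ∈ patAlg E S := fun i j h => by
  simp [Matrix.smul_apply, hx i j h]

lemma patAlg_mul' (hS2 : ∀ i j k : Fin n, (i, j) ∈ S → (j, k) ∈ S → (i, k) ∈ S)
    {x y : Matrix (Fin n) (Fin n) E} (hx : x ∈ patAlg E S) (hy : y ∈ patAlg E S) :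
    x * y ∈ patAlg E S := by
  intro i j h
  rw [Matrix.mul_apply]
  refine Finset.sum_eq_zero fun k _ => ?_
  by_cases h1 : (i, k) ∈ S
  · by_cases h2 : (k, j) ∈ S
    · exact absurd (hS2 i k j h1 h2) h
    · rw [hy k j h2, mul_zero]
  · rw [hx i k h1, zero_mul]

lemma patAlg_pow_apply' (hS1 : ∀ p ∈ S, p.1 < p.2) {a : Matrix (Fin n) (Fin n) E}
    (ha : a ∈ patAlg E S) :
    ∀ (k : ℕ) (i j : Fin n), (j : ℕ) < (i : ℕ) + k → (a ^ k) i j = 0 := by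
  intro k
  induction k with
  | zero =>
    intro i j h
    rw [pow_zero]
    exact Matrix.one_apply_ne (by intro he; subst he; omega)
  | succ k ih =>
    intro i j h
    rw [pow_succ, Matrix.mul_apply]
    refine Finset.sum_eq_zero fun m _ => ?_
    by_cases hm : (m : ℕ) < (j : ℕ)
    · rw [ih i m (by omega), zero_mul]
    · have hmj : (m, j) ∉ S := by
        intro hc
        have h3 : (m : ℕ) < (j : ℕ) := hS1 (m, j) hc
        omega
      rw [ha m j hmj, mul_zero]

lemma patAlg_nilpotent (hS1 : ∀ p ∈ S, p.1 < p.2) {a : Matrix (Fin n) (Fin n) E}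
    (ha : a ∈ patAlg E S) : a ^ n = 0 := by
  ext i j
  rw [Matrix.zero_apply]
  exact patAlg_pow_apply' hS1 ha n i j (by omega)

/-- Truncated square-root style recursion: `p₀ = 0`, `p_{k+1} = (X - p_k²)/2`. -/
noncomputable def sqrtPoly (F : Type) [Field F] : ℕ → Polynomial F
  | 0 => 0
  | k + 1 => Polynomial.C 2⁻¹ * (Polynomial.X - sqrtPoly F k ^ 2)

lemma sqrtPoly_succ (F : Type) [Field F] (k : ℕ) :
    sqrtPoly F (k + 1) = Polynomial.C 2⁻¹ * (Polynomial.X - sqrtPoly F k ^ 2) := rfl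

lemma X_dvd_sqrtPoly (F : Type) [Field F] (k : ℕ) : X ∣ sqrtPoly F k := by
  induction k with
  | zero => simp [sqrtPoly]
  | succ k ih =>
    rw [sqrtPoly_succ]
    exact ((dvd_sub dvd_rfl (dvd_pow ih (by norm_num))).mul_left _)

lemma sqrtPoly_diff (F : Type) [Field F] (k : ℕ) :
    X ^ (k + 1) ∣ sqrtPoly F (k + 1) - sqrtPoly F k := by
  induction k with
  | zero =>
    simp only [sqrtPoly_succ]
    show X ^ 1 ∣ _
    simp [sqrtPoly]
  | succ k ih =>
    have heq : sqrtPoly F (k + 2) - sqrtPoly F (k + 1)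
        = -(Polynomial.C 2⁻¹) * ((sqrtPoly F (k + 1) - sqrtPoly F k)
            * (sqrtPoly F (k + 1) + sqrtPoly F k)) := by
      rw [sqrtPoly_succ F (k+1), sqrtPoly_succ F k]
      ring
    rw [heq, pow_succ]
    exact (mul_dvd_mul ih (dvd_add (X_dvd_sqrtPoly F _) (X_dvd_sqrtPoly F _))).mul_left _

lemma sqrtPoly_key (F : Type) [Field F] (h2 : (2 : F) ≠ 0) (k : ℕ) :
    X ^ (k + 1) ∣ sqrtPoly F k + sqrtPoly F k + sqrtPoly F k ^ 2 - X := by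
  have hC : (Polynomial.C (2 : F)) = 2 := map_ofNat _ 2
  have h : Polynomial.C (2 : F) * sqrtPoly F (k + 1) = X - sqrtPoly F k ^ 2 := by
    rw [sqrtPoly_succ, ← mul_assoc, ← Polynomial.C_mul, mul_inv_cancel₀ h2,
      Polynomial.C_1, one_mul]
  rw [hC] at h
  have h' : sqrtPoly F k + sqrtPoly F k + sqrtPoly F k ^ 2 - X
      = -(2 : Polynomial F) * (sqrtPoly F (k + 1) - sqrtPoly F k) := by
    linear_combination h
  rw [h']
  exact (sqrtPoly_diff F k).mul_left _

end AuxLemmas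


/-- With `G = 1 + 𝔤` a pattern subgroup and `†` an anti-involution as above,
and `𝔲 = {x ∈ 𝔤 | x† = −x}`: if `x ∈ 𝔲` and `g ∈ G` are such that `gx ∈ 𝔲`, then there
exists `h ∈ G` with `gx = h x h†`. -/
theorem left_multiple_in_u_is_twisted_conjugate
    (F : Type) [Field F] [Fintype F] (E : Type) [Field E] [Fintype E] [Algebra F E]
    (hodd : ringChar F ≠ 2)
    {n : ℕ} (S : Set (Fin n × Fin n))
    (hS1 : ∀ p ∈ S, p.1 < p.2)
    (hS2 : ∀ i j k : Fin n, (i, j) ∈ S → (j, k) ∈ S → (i, k) ∈ S)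
    (dag : Matrix (Fin n) (Fin n) E → Matrix (Fin n) (Fin n) E)
    (hdag : IsPatternAntiInvolution F E S dag) :
    ∀ x ∈ patUAlg E S dag, ∀ g ∈ patGrp E S, g * x ∈ patUAlg E S dag →
      ∃ h ∈ patGrp E S, g * x = h * x * dagGrp E dag h := by
  intro x hx g hg hgx
  obtain ⟨a, haA, rfl⟩ := hg
  have h2 : (2 : F) ≠ 0 := Ring.two_ne_zero hodd
  have hxA : x ∈ patAlg E S := hx.1
  have hxd : dag x = -x := hx.2
  -- derive a * x = x * dag a
  have hgx1 : (1 + a) * x = x + a * x := by noncomm_ring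
  have haxA : a * x ∈ patAlg E S := patAlg_mul' hS2 haA hxA
  have hax : a * x = x * dag a := by
    have e1 : dag (x + a * x) = dag x + dag (a * x) := hdag.map_add x hxA _ haxA
    have e2 : dag (a * x) = dag x * dag a := hdag.map_mul a haA x hxA
    have e3 := hgx.2
    rw [hgx1, e1, e2, hxd] at e3
    -- e3 : -x + -x * dag a = -(x + a * x)
    have e4 : -x + -(x * dag a) = -x + -(a * x) := by
      rw [← neg_mul]
      rw [neg_add] at e3
      exact e3
    have := add_left_cancel e4
    exact (neg_inj.mp this).symm
  -- powers of a
  have hpow : ∀ m : ℕ, a ^ (m + 1) ∈ patAlg E S ∧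
      dag (a ^ (m + 1)) = (dag a) ^ (m + 1) ∧
      a ^ (m + 1) * x = x * (dag a) ^ (m + 1) := by
    intro m
    induction m with
    | zero =>
      refine ⟨by simpa using haA, by simp, by simpa using hax⟩
    | succ m ih =>
      refine ⟨?_, ?_, ?_⟩
      · rw [pow_succ]
        exact patAlg_mul' hS2 ih.1 haA
      · rw [pow_succ, hdag.map_mul _ ih.1 _ haA, ih.2.1, ← pow_succ']
      · rw [pow_succ', mul_assoc, ih.2.2, ← mul_assoc, hax, mul_assoc, ← pow_succ']
  -- key lemma for polynomials
  have key : ∀ P : Polynomial F,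
      a * Polynomial.aeval a P ∈ patAlg E S ∧
      dag (a * Polynomial.aeval a P) = dag a * Polynomial.aeval (dag a) P ∧
      (a * Polynomial.aeval a P) * x = x * (dag a * Polynomial.aeval (dag a) P) := by
    intro P
    induction P using Polynomial.induction_on' with
    | add P Q hP hQ =>
      refine ⟨?_, ?_, ?_⟩
      · rw [map_add, mul_add]
        exact patAlg_add' hP.1 hQ.1
      · rw [map_add, mul_add, hdag.map_add _ hP.1 _ hQ.1, hP.2.1, hQ.2.1, map_add, mul_add]
      · rw [map_add, mul_add, add_mul, hP.2.2, hQ.2.2, map_add, mul_add, mul_add]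
    | monomial m c =>
      have hmono : ∀ y : Matrix (Fin n) (Fin n) E,
          y * Polynomial.aeval y (Polynomial.monomial m c) = c • y ^ (m + 1) := by
        intro y
        rw [Polynomial.aeval_monomial, ← Algebra.smul_def, mul_smul_comm, ← pow_succ']
      have hsm : ∀ y : Matrix (Fin n) (Fin n) E,
          (c • y : Matrix (Fin n) (Fin n) E) = algebraMap F E c • y :=
        fun y => (algebraMap_smul E c y).symm
      refine ⟨?_, ?_, ?_⟩
      · rw [hmono, hsm]
        exact patAlg_smul' _ (hpow m).1
      · rw [hmono, hmono, hsm, hdag.map_smul c _ (hpow m).1, (hpow m).2.1,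
          ← hsm, pow_succ']
      · rw [hmono, hmono, smul_mul_assoc, (hpow m).2.2, mul_smul_comm, pow_succ']
  -- the square root b
  obtain ⟨Q, hQ⟩ := X_dvd_sqrtPoly F n
  set b := a * Polynomial.aeval a Q with hbdef
  have hbP : Polynomial.aeval a (sqrtPoly F n) = b := by
    rw [hQ, _root_.map_mul, Polynomial.aeval_X]
  have hbA : b ∈ patAlg E S := (key Q).1
  have hbd : dag b = dag a * Polynomial.aeval (dag a) Q := (key Q).2.1
  have hbx : b * x = x * dag b := by rw [hbd]; exact (key Q).2.2
  -- the equation b + b + b * b = a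
  have han : a ^ n = 0 := patAlg_nilpotent hS1 haA
  have heq : b + b + b * b = a := by
    obtain ⟨R, hR⟩ := sqrtPoly_key F h2 n
    have e : b + b + b * b - a
        = Polynomial.aeval a (sqrtPoly F n + sqrtPoly F n + sqrtPoly F n ^ 2
            - Polynomial.X) := by
      simp [map_add, map_sub, map_pow, Polynomial.aeval_X, pow_two, hbP]
    rw [hR, _root_.map_mul, map_pow, Polynomial.aeval_X, pow_succ, han,
      zero_mul, zero_mul] at e
    exact sub_eq_zero.mp e
  -- assemble
  refine ⟨1 + b, ⟨b, hbA, rfl⟩, ?_⟩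
  have hdg : dagGrp E dag (1 + b) = 1 + dag b := by
    rw [dagGrp, add_sub_cancel_left]
  rw [hdg]
  have expand : (1 + b) * x * (1 + dag b)
      = x + b * x + (x * dag b + b * (x * dag b)) := by noncomm_ring
  rw [expand, ← hbx, ← heq]
  noncomm_ring
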